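/- Let X be a spherical 2-design in √m S^{m-1} of size n which is an s-distance set with degree S = s. Let F_s be the projection onto Harm_s(X), q_s the degree-s predegree polynomial, and μ = tr(F_s) = (1/n)∑_{x∈X} m_s(x) where m_s(x) = n(F_s)_{x,x}. Then the orthogonal projection of F_s onto the space 𝔄* = {(1/n)p((nG)^∘) : p ∈ ℝ[t]} with respect to the trace inner product equals (μ/(n q_s(m))) · q_s((nG)^∘). -/

import Mathlib

open scoped InnerProductSpace Classical

noncomputable section

variable {V : Type*} [NormedAddCommGroup V] [InnerProductSpace ℝ V]

/-- `X` lies on the sphere of squared radius `m` (radius `√m`). -/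
def onSphere (m : ℝ) (X : Finset V) : Prop := ∀ x ∈ X, ⟪x, x⟫_ℝ = m

/-- The normalized Gram matrix `G` of `X`. -/
def gram (X : Finset V) : Matrix X X ℝ :=
  Matrix.of fun x y => (1 / (X.card : ℝ)) * ⟪(x : V), (y : V)⟫_ℝ

/-- The two conditions characterizing spherical 2-designs: `GJ = 0` and `G² = G`. -/
def IsTwoDesign (X : Finset V) : Prop :=
  (∀ x ∈ X, ∑ y ∈ X, ⟪x, y⟫_ℝ = 0) ∧
  (∀ x ∈ X, ∀ y ∈ X, (1 / (X.card : ℝ)) * ∑ z ∈ X, ⟪x, z⟫_ℝ * ⟪z, y⟫_ℝ = ⟪x, y⟫_ℝ)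

/-- `Pol_k(X)`: span of the zonal polynomials of degree at most `k`. -/
def Pol (X : Finset V) (k : ℕ) : Submodule ℝ (X → ℝ) :=
  Submodule.span ℝ {f | ∃ a ∈ X, ∃ p : Polynomial ℝ,
    p.natDegree ≤ k ∧ f = fun x => p.eval ⟪a, x.1⟫_ℝ}

/-- The inner product `(f,g) = (1/n) ∑ f(x) g(x)` on `C(X)`. -/
def inn (X : Finset V) (f g : X → ℝ) : ℝ := (1 / (X.card : ℝ)) * ∑ x, f x * g x

def innL (X : Finset V) (f : X → ℝ) : (X → ℝ) →ₗ[ℝ] ℝ where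
  toFun g := inn X f g
  map_add' g h := by
    simp only [inn, Pi.add_apply, mul_add, Finset.sum_add_distrib]
  map_smul' c g := by
    simp only [inn, Pi.smul_apply, smul_eq_mul, RingHom.id_apply]
    rw [Finset.sum_congr rfl (fun x _ => by ring : ∀ x ∈ Finset.univ, f x * (c * g x) = c * (f x * g x)),
      ← Finset.mul_sum]
    ring

/-- The orthogonal complement of `W` with respect to `inn`. -/
def perp (X : Finset V) (W : Submodule ℝ (X → ℝ)) : Submodule ℝ (X → ℝ) :=
  ⨅ f ∈ W, LinearMap.ker (innL X f)

/-- The harmonic spaces `Harm_k(X)`. -/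
def Harm (X : Finset V) : ℕ → Submodule ℝ (X → ℝ)
  | 0 => Pol X 0
  | (k+1) => Pol X (k+1) ⊓ perp X (Pol X k)

/-- `F` is the matrix of the orthogonal projection of `C(X)` onto `W`
(with respect to the inner product `inn`). -/
def IsProjOnto (X : Finset V) (W : Submodule ℝ (X → ℝ)) (F : Matrix X X ℝ) : Prop :=
  (∀ f, F.mulVec f ∈ W) ∧ (∀ f ∈ W, F.mulVec f = f) ∧ (∀ f ∈ perp X W, F.mulVec f = 0)

/-- The degree `S` of `X`: the least `i` with `Pol_i(X) = C(X)`. -/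
def degS (X : Finset V) : ℕ := sInf {i | Pol X i = ⊤}

/-- `A(X)`, the set of inner products between distinct points of `X`. -/
def Aset (X : Finset V) : Finset ℝ :=
  ((X ×ˢ X).filter fun p => p.1 ≠ p.2).image fun p => ⟪p.1, p.2⟫_ℝ

/-- `A'(X) = A(X) ∪ {m}`. -/
def Aset' (m : ℝ) (X : Finset V) : Finset ℝ := insert m (Aset X)

/-- `κ_α`, the number of ordered pairs of points of `X` with inner product `α`. -/
def kappa (X : Finset V) (α : ℝ) : ℕ := ((X ×ˢ X).filter fun p => ⟪p.1, p.2⟫_ℝ = α).card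

/-- The inner product `⟨p,q⟩ = (1/n²) ∑_{α ∈ A'(X)} κ_α p(α) q(α)` on polynomials. -/
def pInn (m : ℝ) (X : Finset V) (p q : Polynomial ℝ) : ℝ :=
  (1 / (X.card : ℝ) ^ 2) * ∑ α ∈ Aset' m X, (kappa X α : ℝ) * (p.eval α * q.eval α)

/-- `q` is the family of predegree polynomials of `X`. -/
def IsPredegree (m : ℝ) (X : Finset V) (s : ℕ) (q : ℕ → Polynomial ℝ) : Prop :=
  (∀ k ≤ s, (q k).natDegree = k ∧ q k ≠ 0) ∧
  (∀ k ≤ s, ∀ h ≤ s, pInn m X (q k) (q h) = if k = h then (q k).eval m else 0)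

/-- The relation matrix `A_α` of `X`. -/
def relMat (X : Finset V) (α : ℝ) : Matrix X X ℝ :=
  Matrix.of fun x y => if ⟪(x : V), (y : V)⟫_ℝ = α then 1 else 0

/-- `X` carries the structure of a `Q`-polynomial association scheme with respect to
the idempotents `F_0, …, F_s` (whose relations are given by the inner products). -/
def CarriesQPolyScheme (m : ℝ) (X : Finset V) (s : ℕ) (F : ℕ → Matrix X X ℝ) : Prop :=
  (∀ α ∈ Aset' m X, ∀ β ∈ Aset' m X, relMat X α * relMat X β ∈
      Submodule.span ℝ (relMat X '' (Aset' m X : Set ℝ))) ∧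
  (∀ i ≤ s, F i ∈ Submodule.span ℝ (relMat X '' (Aset' m X : Set ℝ))) ∧
  (∀ i ≤ s, ∀ j ≤ s, F i * F j = if i = j then F i else 0) ∧
  (∑ i ∈ Finset.range (s + 1), F i = 1) ∧
  (F 0 = Matrix.of fun _ _ => 1 / (X.card : ℝ)) ∧
  (∀ i ≤ s, ∃ v : Polynomial ℝ, v.natDegree = i ∧
      F i = Matrix.of fun x y => (1 / (X.card : ℝ)) * v.eval ((X.card : ℝ) * F 1 x y))


section AuxLemmas

lemma aux_inn_comm (X : Finset V) (f g : X → ℝ) : inn X f g = inn X g f := by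
  simp only [inn, mul_comm]

lemma aux_eq_of_ip {m : ℝ} {X : Finset V} (hsph : onSphere m X) {x y : V}
    (hx : x ∈ X) (hy : y ∈ X) (h : ⟪x, y⟫_ℝ = m) : x = y := by
  have hyx : ⟪y, x⟫_ℝ = m := by rw [real_inner_comm]; exact h
  have h0 : ⟪x - y, x - y⟫_ℝ = 0 := by
    rw [inner_sub_left, inner_sub_right, inner_sub_right, h, hyx, hsph x hx, hsph y hy]
    ring
  rw [inner_self_eq_zero, sub_eq_zero] at h0
  exact h0

lemma aux_ip_mem {m : ℝ} {X : Finset V} (hsph : onSphere m X) {x y : V}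
    (hx : x ∈ X) (hy : y ∈ X) : ⟪x, y⟫_ℝ ∈ Aset' m X := by
  by_cases hxy : x = y
  · subst hxy; rw [hsph x hx]; exact Finset.mem_insert_self _ _
  · exact Finset.mem_insert_of_mem (Finset.mem_image.2
      ⟨(x, y), Finset.mem_filter.2 ⟨Finset.mem_product.2 ⟨hx, hy⟩, hxy⟩, rfl⟩)

lemma aux_m_not_mem {m : ℝ} {X : Finset V} (hsph : onSphere m X) : m ∉ Aset X := by
  intro hm
  obtain ⟨⟨a, b⟩, hab, hip⟩ := Finset.mem_image.1 hm
  obtain ⟨hmem, hne⟩ := Finset.mem_filter.1 hab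
  obtain ⟨ha, hb⟩ := Finset.mem_product.1 hmem
  exact hne (aux_eq_of_ip hsph ha hb hip)

lemma aux_kappa_m {m : ℝ} {X : Finset V} (hsph : onSphere m X) : kappa X m = X.card := by
  have : ((X ×ˢ X).filter fun p => ⟪p.1, p.2⟫_ℝ = m) = X.image fun a => (a, a) := by
    ext ⟨a, b⟩
    simp only [Finset.mem_filter, Finset.mem_product, Finset.mem_image, Prod.mk.injEq]
    constructor
    · rintro ⟨⟨ha, hb⟩, hip⟩
      exact ⟨a, ha, rfl, aux_eq_of_ip hsph ha hb hip⟩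
    · rintro ⟨c, hc, rfl, rfl⟩
      exact ⟨⟨hc, hc⟩, hsph c hc⟩
  rw [kappa, this, Finset.card_image_of_injective _ (fun a b h => congrArg Prod.fst h)]

lemma aux_kappa_pos {m : ℝ} {X : Finset V} (hne : X.Nonempty) (hsph : onSphere m X)
    {α : ℝ} (hα : α ∈ Aset' m X) : 0 < kappa X α := by
  rw [kappa, Finset.card_pos]
  rcases Finset.mem_insert.1 hα with rfl | hα
  · obtain ⟨a, ha⟩ := hne
    exact ⟨(a, a), Finset.mem_filter.2 ⟨Finset.mem_product.2 ⟨ha, ha⟩, hsph a ha⟩⟩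
  · obtain ⟨⟨a, b⟩, hab, hip⟩ := Finset.mem_image.1 hα
    exact ⟨(a, b), Finset.mem_filter.2 ⟨(Finset.mem_filter.1 hab).1, hip⟩⟩

lemma aux_sum_pairs {m : ℝ} {X : Finset V} (hsph : onSphere m X) (f : ℝ → ℝ) :
    ∑ x : X, ∑ y : X, f ⟪(x : V), (y : V)⟫_ℝ = ∑ α ∈ Aset' m X, (kappa X α : ℝ) * f α := by
  have h1 : ∑ x : X, ∑ y : X, f ⟪(x : V), (y : V)⟫_ℝ
      = ∑ p ∈ X ×ˢ X, f ⟪p.1, p.2⟫_ℝ := by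
    rw [Finset.sum_product]
    rw [← Finset.sum_coe_sort X (fun a => ∑ b ∈ X, f ⟪a, b⟫_ℝ)]
    refine Finset.sum_congr rfl fun x _ => ?_
    rw [← Finset.sum_coe_sort X (fun b => f ⟪(x : V), b⟫_ℝ)]
  rw [h1, ← Finset.sum_fiberwise_of_maps_to (g := fun p : V × V => ⟪p.1, p.2⟫_ℝ)
    (fun p hp => aux_ip_mem hsph (Finset.mem_product.1 hp).1 (Finset.mem_product.1 hp).2)
    (fun p => f ⟪p.1, p.2⟫_ℝ)]
  refine Finset.sum_congr rfl fun α hα => ?_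
  rw [Finset.sum_congr rfl (fun p hp => by rw [(Finset.mem_filter.1 hp).2]),
    Finset.sum_const, kappa, nsmul_eq_mul]

variable {m : ℝ} {X : Finset V} {s : ℕ} {q : ℕ → Polynomial ℝ}

lemma aux_card_Aset' (hsph : onSphere m X) (hs : (Aset X).card = s) :
    (Aset' m X).card = s + 1 := by
  rw [Aset', Finset.card_insert_of_notMem (aux_m_not_mem hsph), hs]

lemma aux_B_eval (hne : X.Nonempty) (hq : IsPredegree m X s q) {i j : ℕ}
    (hi : i ≤ s) (hj : j ≤ s) :
    ∑ α ∈ Aset' m X, (kappa X α : ℝ) * ((q i).eval α * (q j).eval α)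
      = (X.card : ℝ) ^ 2 * (if i = j then (q i).eval m else 0) := by
  have hN : (X.card : ℝ) ≠ 0 := Nat.cast_ne_zero.2 hne.card_pos.ne'
  have h := hq.2 i hi j hj
  rw [pInn] at h
  field_simp at h
  simp only [← mul_assoc]
  rw [h]; split_ifs with hij <;> simp [hij]

lemma aux_q_eval_m_ne (hne : X.Nonempty) (hsph : onSphere m X) (hs : (Aset X).card = s)
    (hq : IsPredegree m X s q) : ∀ i ≤ s, (q i).eval m ≠ 0 := by
  intro i hi h0
  have hsum : ∑ α ∈ Aset' m X, (kappa X α : ℝ) * ((q i).eval α * (q i).eval α) = 0 := by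
    rw [aux_B_eval hne hq hi hi, if_pos rfl, h0, mul_zero]
  have hall : ∀ α ∈ Aset' m X, (q i).eval α = 0 := by
    intro α hα
    have hnn : ∀ β ∈ Aset' m X, 0 ≤ (kappa X β : ℝ) * ((q i).eval β * (q i).eval β) :=
      fun β _ => mul_nonneg (Nat.cast_nonneg _) (mul_self_nonneg _)
    have h1 := (Finset.sum_eq_zero_iff_of_nonneg hnn).1 hsum α hα
    have h2 : (kappa X α : ℝ) ≠ 0 := Nat.cast_ne_zero.2 (aux_kappa_pos hne hsph hα).ne'
    have := (mul_eq_zero.1 h1).resolve_left h2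
    exact mul_self_eq_zero.1 this
  have hsub : (Aset' m X).val ⊆ (q i).roots := by
    intro a ha
    exact (Polynomial.mem_roots (hq.1 i hi).2).2 (hall a ha)
  have hcard := Polynomial.card_le_degree_of_subset_roots hsub
  rw [aux_card_Aset' hsph hs, (hq.1 i hi).1] at hcard
  omega

lemma aux_span_top (hne : X.Nonempty) (hsph : onSphere m X) (hs : (Aset X).card = s)
    (hq : IsPredegree m X s q) :
    Submodule.span ℝ (Set.range fun i : Fin (s+1) =>
      fun α : ↥(Aset' m X) => (q i.1).eval α.1) = ⊤ := by
  set w : Fin (s+1) → (↥(Aset' m X) → ℝ) :=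
    fun i α => (q i.1).eval α.1 with hw
  have hli : LinearIndependent ℝ w := by
    rw [Fintype.linearIndependent_iff]
    intro g hg j
    have hzero : ∀ α ∈ Aset' m X, ∑ i : Fin (s+1), g i * (q i.1).eval α = 0 := by
      intro α hα
      have := congrFun hg ⟨α, hα⟩
      simpa [hw] using this
    have hBj : ∑ α ∈ Aset' m X, (kappa X α : ℝ) *
        ((∑ i : Fin (s+1), g i * (q i.1).eval α) * (q j.1).eval α) = 0 :=
      Finset.sum_eq_zero fun α hα => by rw [hzero α hα]; ring
    have hswap : ∑ α ∈ Aset' m X, (kappa X α : ℝ) *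
        ((∑ i : Fin (s+1), g i * (q i.1).eval α) * (q j.1).eval α)
        = ∑ i : Fin (s+1), g i * ((X.card : ℝ) ^ 2 *
            (if i.1 = j.1 then (q i.1).eval m else 0)) := by
      simp only [Finset.sum_mul, Finset.mul_sum]
      rw [Finset.sum_comm]
      refine Finset.sum_congr rfl fun i _ => ?_
      have hb := aux_B_eval hne hq (Nat.lt_succ_iff.1 i.isLt) (Nat.lt_succ_iff.1 j.isLt)
      rw [← hb, Finset.mul_sum]
      exact Finset.sum_congr rfl fun α _ => by ring
    rw [hswap] at hBj
    have hcol : ∑ i : Fin (s+1), g i * ((X.card : ℝ) ^ 2 *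
        (if i.1 = j.1 then (q i.1).eval m else 0))
        = g j * ((X.card : ℝ) ^ 2 * (q j.1).eval m) := by
      rw [Finset.sum_eq_single_of_mem j (Finset.mem_univ j)]
      · rw [if_pos rfl]
      · intro i _ hij
        rw [if_neg (fun h => hij (Fin.ext h)), mul_zero, mul_zero]
    rw [hcol] at hBj
    have hN : (X.card : ℝ) ≠ 0 := Nat.cast_ne_zero.2 hne.card_pos.ne'
    have hqm := aux_q_eval_m_ne hne hsph hs hq j.1 (Nat.lt_succ_iff.1 j.isLt)
    exact (mul_eq_zero.1 hBj).resolve_right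
      (mul_ne_zero (pow_ne_zero _ hN) hqm)
  have hcard : Fintype.card (Fin (s+1)) = Module.finrank ℝ (↥(Aset' m X) → ℝ) := by
    rw [Module.finrank_fintype_fun_eq_card, Fintype.card_coe, aux_card_Aset' hsph hs,
      Fintype.card_fin]
  exact hli.span_eq_top_of_card_eq_finrank hcard

lemma aux_coeffs (hne : X.Nonempty) (hsph : onSphere m X) (hs : (Aset X).card = s)
    (hq : IsPredegree m X s q) (f : ↥(Aset' m X) → ℝ) :
    ∃ c : Fin (s+1) → ℝ, ∀ α : ↥(Aset' m X),
      f α = ∑ i : Fin (s+1), c i * (q i.1).eval α.1 := by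
  have hmem : f ∈ Submodule.span ℝ (Set.range fun i : Fin (s+1) =>
      fun α : ↥(Aset' m X) => (q i.1).eval α.1) := by
    rw [aux_span_top hne hsph hs hq]; trivial
  obtain ⟨c, hc⟩ := (Submodule.mem_span_range_iff_exists_fun ℝ).1 hmem
  refine ⟨c, fun α => ?_⟩
  have := congrFun hc α
  simp only [Finset.sum_apply, Pi.smul_apply, smul_eq_mul] at this
  exact this.symm

lemma aux_H (hne : X.Nonempty) (hsph : onSphere m X) (hs : (Aset X).card = s)
    (hq : IsPredegree m X s q) :
    ∀ α ∈ Aset' m X, ∑ i ∈ Finset.range (s+1), (q i).eval α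
      = if α = m then (X.card : ℝ) else 0 := by
  have hN : (X.card : ℝ) ≠ 0 := Nat.cast_ne_zero.2 hne.card_pos.ne'
  set vv : ℝ → ℝ := fun α => (∑ i ∈ Finset.range (s+1), (q i).eval α)
    - (if α = m then (X.card : ℝ) else 0) with hvv
  suffices hmain : ∀ α ∈ Aset' m X, vv α = 0 by
    intro α hα
    have := hmain α hα
    rw [hvv] at this
    simpa [sub_eq_zero] using this
  -- B-pairing of vv with each q_j vanishes
  have hvB : ∀ j ≤ s, ∑ α ∈ Aset' m X, (kappa X α : ℝ) * (vv α * (q j).eval α) = 0 := by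
    intro j hj
    have hsplit : ∑ α ∈ Aset' m X, (kappa X α : ℝ) * (vv α * (q j).eval α)
        = (∑ α ∈ Aset' m X, (kappa X α : ℝ) *
            ((∑ i ∈ Finset.range (s+1), (q i).eval α) * (q j).eval α))
          - ∑ α ∈ Aset' m X, (kappa X α : ℝ) *
            ((if α = m then (X.card : ℝ) else 0) * (q j).eval α) := by
      rw [← Finset.sum_sub_distrib]
      exact Finset.sum_congr rfl fun α _ => by rw [hvv]; ring
    have hS1 : ∑ α ∈ Aset' m X, (kappa X α : ℝ) *
        ((∑ i ∈ Finset.range (s+1), (q i).eval α) * (q j).eval α)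
        = (X.card : ℝ) ^ 2 * (q j).eval m := by
      have hsw : ∑ α ∈ Aset' m X, (kappa X α : ℝ) *
          ((∑ i ∈ Finset.range (s+1), (q i).eval α) * (q j).eval α)
          = ∑ i ∈ Finset.range (s+1), ∑ α ∈ Aset' m X,
              (kappa X α : ℝ) * ((q i).eval α * (q j).eval α) := by
        simp only [Finset.sum_mul, Finset.mul_sum]
        rw [Finset.sum_comm]
      rw [hsw]
      have : ∀ i ∈ Finset.range (s+1), ∑ α ∈ Aset' m X,
          (kappa X α : ℝ) * ((q i).eval α * (q j).eval α)
          = (X.card : ℝ) ^ 2 * (if i = j then (q i).eval m else 0) := fun i hi =>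
        aux_B_eval hne hq (Nat.lt_succ_iff.1 (Finset.mem_range.1 hi)) hj
      rw [Finset.sum_congr rfl this]
      simp only [mul_ite, mul_zero]
      rw [Finset.sum_ite_eq' (Finset.range (s+1)) j fun i => (X.card : ℝ) ^ 2 * (q i).eval m,
        if_pos (Finset.mem_range.2 (by omega))]
    have hS2 : ∑ α ∈ Aset' m X, (kappa X α : ℝ) *
        ((if α = m then (X.card : ℝ) else 0) * (q j).eval α)
        = (X.card : ℝ) ^ 2 * (q j).eval m := by
      simp only [Aset']
      rw [Finset.sum_insert (aux_m_not_mem hsph), if_pos rfl, aux_kappa_m hsph,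
        Finset.sum_eq_zero fun α hα => by
          rw [if_neg (fun h : α = m => aux_m_not_mem hsph (h ▸ hα)), zero_mul, mul_zero]]
      ring
    rw [hsplit, hS1, hS2, sub_self]
  -- expand vv in the span and pair with itself
  obtain ⟨c, hc⟩ := aux_coeffs hne hsph hs hq (fun α : ↥(Aset' m X) => vv α.1)
  have hvv0 : ∑ α ∈ Aset' m X, (kappa X α : ℝ) * (vv α * vv α) = 0 := by
    have h1 : ∑ α ∈ Aset' m X, (kappa X α : ℝ) * (vv α * vv α)
        = ∑ i : Fin (s+1), c i * ∑ α ∈ Aset' m X,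
            (kappa X α : ℝ) * (vv α * (q i.1).eval α) := by
      have : ∀ α ∈ Aset' m X, (kappa X α : ℝ) * (vv α * vv α)
          = ∑ i : Fin (s+1), c i * ((kappa X α : ℝ) * (vv α * (q i.1).eval α)) := by
        intro α hα
        have hev := hc ⟨α, hα⟩
        calc (kappa X α : ℝ) * (vv α * vv α)
            = (kappa X α : ℝ) * (vv α * ∑ i : Fin (s+1), c i * (q i.1).eval α) := by
              rw [← hev]
          _ = ∑ i : Fin (s+1), c i * ((kappa X α : ℝ) * (vv α * (q i.1).eval α)) := by
              rw [Finset.mul_sum, Finset.mul_sum]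
              exact Finset.sum_congr rfl fun i _ => by ring
      rw [Finset.sum_congr rfl this, Finset.sum_comm]
      exact Finset.sum_congr rfl fun i _ => by rw [Finset.mul_sum]
    rw [h1]
    refine Finset.sum_eq_zero fun i _ => ?_
    rw [hvB i.1 (Nat.lt_succ_iff.1 i.isLt), mul_zero]
  intro α hα
  have hnn : ∀ β ∈ Aset' m X, 0 ≤ (kappa X β : ℝ) * (vv β * vv β) :=
    fun β _ => mul_nonneg (Nat.cast_nonneg _) (mul_self_nonneg _)
  have h1 := (Finset.sum_eq_zero_iff_of_nonneg hnn).1 hvv0 α hα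
  have h2 : (kappa X α : ℝ) ≠ 0 := Nat.cast_ne_zero.2 (aux_kappa_pos hne hsph hα).ne'
  exact mul_self_eq_zero.1 ((mul_eq_zero.1 h1).resolve_left h2)

end AuxLemmas

theorem statement_12 {m : ℕ} (X : Finset (EuclideanSpace ℝ (Fin m))) (hne : X.Nonempty)
    (hsph : onSphere (m : ℝ) X) (hdes : IsTwoDesign X) (s : ℕ) (hs : (Aset X).card = s)
    (hdeg : degS X = s)
    (F : ℕ → Matrix X X ℝ) (hF : ∀ i, IsProjOnto X (Harm X i) (F i))
    (q : ℕ → Polynomial ℝ) (hq : IsPredegree (m : ℝ) X s q) :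
    ∀ p : Polynomial ℝ,
      Matrix.trace ((F s - Matrix.of fun x y : X =>
            (Matrix.trace (F s) / ((X.card : ℝ) * (q s).eval (m : ℝ))) *
              (q s).eval ⟪x.1, y.1⟫_ℝ).transpose *
          (Matrix.of fun x y : X => (1 / (X.card : ℝ)) * p.eval ⟪x.1, y.1⟫_ℝ)) = 0 := by
  intro p
  have hN : ((X.card : ℝ)) ≠ 0 := Nat.cast_ne_zero.2 hne.card_pos.ne'
  have hqm : (q s).eval (m : ℝ) ≠ 0 := aux_q_eval_m_ne hne hsph hs hq s le_rfl
  -- Step A : pairing of F s against low-degree zonal polynomials vanishes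
  have hL0 : ∀ i < s, ∑ x : X, ∑ y : X, (F s) x y * (q i).eval ⟪x.1, y.1⟫_ℝ = 0 := by
    intro i hi
    obtain ⟨k, hk⟩ : ∃ k, s = k + 1 := ⟨s - 1, by omega⟩
    refine Finset.sum_eq_zero fun x _ => ?_
    have hgx : (fun y : X => (q i).eval ⟪x.1, y.1⟫_ℝ) ∈ Pol X k :=
      Submodule.subset_span ⟨x.1, x.2, q i, by rw [(hq.1 i (by omega)).1]; omega, rfl⟩
    have hperp : (fun y : X => (q i).eval ⟪x.1, y.1⟫_ℝ) ∈ perp X (Harm X s) := by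
      simp only [perp, Submodule.mem_iInf, LinearMap.mem_ker]
      intro f hf
      rw [hk] at hf
      rw [show Harm X (k + 1) = Pol X (k + 1) ⊓ perp X (Pol X k) from rfl] at hf
      have hf2 : f ∈ perp X (Pol X k) := (Submodule.mem_inf.1 hf).2
      simp only [perp, Submodule.mem_iInf, LinearMap.mem_ker] at hf2
      have h0 := hf2 _ hgx
      show inn X f _ = 0
      rw [aux_inn_comm]
      exact h0
    have hmv := (hF s).2.2 _ hperp
    have hmx := congrFun hmv x
    simpa [Matrix.mulVec, dotProduct] using hmx
  -- Step B : pairing of F s against q s gives n * trace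
  have hB : ∑ x : X, ∑ y : X, (F s) x y * (q s).eval ⟪x.1, y.1⟫_ℝ
      = (X.card : ℝ) * Matrix.trace (F s) := by
    have hsum1 : ∀ x y : X, ∑ i ∈ Finset.range (s + 1), (q i).eval ⟪x.1, y.1⟫_ℝ
        = if x = y then (X.card : ℝ) else 0 := by
      intro x y
      rw [aux_H hne hsph hs hq _ (aux_ip_mem hsph x.2 y.2)]
      by_cases hxy : x = y
      · rw [if_pos hxy, if_pos (by rw [hxy]; exact hsph y.1 y.2)]
      · rw [if_neg hxy, if_neg (fun h => hxy (Subtype.ext (aux_eq_of_ip hsph x.2 y.2 h)))]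
    have hLH : ∑ x : X, ∑ y : X, (F s) x y *
        (∑ i ∈ Finset.range (s + 1), (q i).eval ⟪x.1, y.1⟫_ℝ)
        = (X.card : ℝ) * Matrix.trace (F s) := by
      have hrow : ∀ x : X, ∑ y : X, (F s) x y *
          (∑ i ∈ Finset.range (s + 1), (q i).eval ⟪x.1, y.1⟫_ℝ)
          = (F s) x x * (X.card : ℝ) := by
        intro x
        rw [Finset.sum_congr rfl fun y _ => by rw [hsum1 x y]]
        simp
      rw [Finset.sum_congr rfl fun x _ => hrow x, Matrix.trace, Finset.mul_sum]
      exact Finset.sum_congr rfl fun x _ => by rw [Matrix.diag_apply]; ring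
    have hsplit : ∑ x : X, ∑ y : X, (F s) x y *
        (∑ i ∈ Finset.range (s + 1), (q i).eval ⟪x.1, y.1⟫_ℝ)
        = ∑ i ∈ Finset.range (s + 1), ∑ x : X, ∑ y : X,
            (F s) x y * (q i).eval ⟪x.1, y.1⟫_ℝ := by
      simp only [Finset.mul_sum]
      rw [Finset.sum_congr rfl fun x _ => Finset.sum_comm, Finset.sum_comm]
    rw [← hLH, hsplit, Finset.sum_range_succ,
      Finset.sum_eq_zero fun i hi => hL0 i (Finset.mem_range.1 hi), zero_add]
  -- expand p on the inner-product values
  obtain ⟨c, hc⟩ := aux_coeffs hne hsph hs hq (fun α : ↥(Aset' (m : ℝ) X) => p.eval α.1)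
  have hpα : ∀ α ∈ Aset' (m : ℝ) X, p.eval α = ∑ i : Fin (s + 1), c i * (q i.1).eval α :=
    fun α hα => hc ⟨α, hα⟩
  have hsl : s < s + 1 := by omega
  have hLp : ∑ x : X, ∑ y : X, (F s) x y * p.eval ⟪x.1, y.1⟫_ℝ
      = c ⟨s, hsl⟩ * ((X.card : ℝ) * Matrix.trace (F s)) := by
    have h1 : ∀ x y : X, (F s) x y * p.eval ⟪x.1, y.1⟫_ℝ
        = ∑ i : Fin (s + 1), c i * ((F s) x y * (q i.1).eval ⟪x.1, y.1⟫_ℝ) := by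
      intro x y
      rw [hpα _ (aux_ip_mem hsph x.2 y.2), Finset.mul_sum]
      exact Finset.sum_congr rfl fun i _ => by ring
    rw [Finset.sum_congr rfl fun x (_ : x ∈ Finset.univ) =>
      Finset.sum_congr rfl fun y (_ : y ∈ Finset.univ) => h1 x y]
    rw [Finset.sum_congr rfl fun x (_ : x ∈ Finset.univ) => Finset.sum_comm, Finset.sum_comm]
    rw [Finset.sum_eq_single_of_mem (⟨s, hsl⟩ : Fin (s + 1)) (Finset.mem_univ _)]
    · rw [← hB, Finset.mul_sum]
      exact Finset.sum_congr rfl fun x _ => by rw [Finset.mul_sum]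
    · intro i _ hisl
      have hlt : i.1 < s := by
        rcases Nat.lt_succ_iff_lt_or_eq.1 i.isLt with h | h
        · exact h
        · exact absurd (Fin.ext h) hisl
      have : ∑ x : X, ∑ y : X, c i * ((F s) x y * (q i.1).eval ⟪x.1, y.1⟫_ℝ)
          = c i * ∑ x : X, ∑ y : X, (F s) x y * (q i.1).eval ⟪x.1, y.1⟫_ℝ := by
        rw [Finset.mul_sum]
        exact Finset.sum_congr rfl fun x _ => by rw [Finset.mul_sum]
      rw [this, hL0 i.1 hlt, mul_zero]
  have hRp : ∑ x : X, ∑ y : X, (q s).eval ⟪x.1, y.1⟫_ℝ * p.eval ⟪x.1, y.1⟫_ℝ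
      = c ⟨s, hsl⟩ * ((X.card : ℝ) ^ 2 * (q s).eval (m : ℝ)) := by
    rw [aux_sum_pairs hsph (fun t => (q s).eval t * p.eval t)]
    have h1 : ∀ α ∈ Aset' (m : ℝ) X, (kappa X α : ℝ) * ((q s).eval α * p.eval α)
        = ∑ i : Fin (s + 1), c i * ((kappa X α : ℝ) * ((q s).eval α * (q i.1).eval α)) := by
      intro α hα
      rw [hpα α hα, Finset.mul_sum, Finset.mul_sum]
      exact Finset.sum_congr rfl fun i _ => by ring
    rw [Finset.sum_congr rfl h1, Finset.sum_comm]
    have h2 : ∀ i : Fin (s + 1), ∑ α ∈ Aset' (m : ℝ) X,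
        c i * ((kappa X α : ℝ) * ((q s).eval α * (q i.1).eval α))
        = c i * ((X.card : ℝ) ^ 2 * (if s = i.1 then (q s).eval (m : ℝ) else 0)) := by
      intro i
      rw [← Finset.mul_sum, aux_B_eval hne hq le_rfl (Nat.lt_succ_iff.1 i.isLt)]
    rw [Finset.sum_congr rfl fun i _ => h2 i]
    rw [Finset.sum_eq_single_of_mem (⟨s, hsl⟩ : Fin (s + 1)) (Finset.mem_univ _)]
    · rw [if_pos rfl]
    · intro i _ hisl
      rw [if_neg (fun h => hisl (Fin.ext h.symm)), mul_zero, mul_zero]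
  -- final computation
  rw [Matrix.trace]
  simp only [Matrix.diag_apply, Matrix.mul_apply, Matrix.transpose_apply, Matrix.sub_apply,
    Matrix.of_apply]
  rw [Finset.sum_comm]
  have hexp : ∀ a b : X, ((F s) a b - Matrix.trace (F s) / ((X.card : ℝ) * (q s).eval (m : ℝ))
        * (q s).eval ⟪a.1, b.1⟫_ℝ) * (1 / (X.card : ℝ) * p.eval ⟪a.1, b.1⟫_ℝ)
      = 1 / (X.card : ℝ) * ((F s) a b * p.eval ⟪a.1, b.1⟫_ℝ)
        - Matrix.trace (F s) / ((X.card : ℝ) * (q s).eval (m : ℝ)) * (1 / (X.card : ℝ))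
          * ((q s).eval ⟪a.1, b.1⟫_ℝ * p.eval ⟪a.1, b.1⟫_ℝ) := fun a b => by ring
  rw [Finset.sum_congr rfl fun a (_ : a ∈ Finset.univ) =>
    Finset.sum_congr rfl fun b (_ : b ∈ Finset.univ) => hexp a b]
  rw [Finset.sum_congr rfl fun a (_ : a ∈ Finset.univ) => Finset.sum_sub_distrib _ _,
    Finset.sum_sub_distrib]
  rw [Finset.sum_congr rfl fun a (_ : a ∈ Finset.univ) =>
    (Finset.mul_sum _ _ _).symm, ← Finset.mul_sum]
  rw [Finset.sum_congr rfl fun a (_ : a ∈ Finset.univ) =>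
    (Finset.mul_sum _ _ _).symm, ← Finset.mul_sum]
  rw [hLp, hRp]
  field_simp
  ring

end
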